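/- Let m ≥ 2 be an integer. For every x ∈ ℝ and every s ∈ ℂ, the series ∑_{k=0}^∞ H_{k+m}(x) s^k / ( k! ( ∏_{j=1}^m (k + j) )^{3/2} ) converges absolutely, the integral below converges, and ∑_{k=0}^∞ H_{k+m}(x) s^k / ( k! ( ∏_{j=1}^m (k + j) )^{3/2} ) = (2/√π)^m ∫_0^∞ ϖ_m(t) exp(2 x s e^{−t} − s² e^{−2t}) H_m(x − s e^{−t}) dt. -/

import Mathlib

open MeasureTheory

/-- The physicists' Hermite polynomials, evaluated at complex arguments:
`H_0 = 1`, `H_1(x) = 2x`, `H_{n+1}(x) = 2x H_n(x) − 2n H_{n−1}(x)`. -/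
noncomputable def hermiteC : ℕ → ℂ → ℂ
  | 0, _ => 1
  | 1, x => 2 * x
  | (n + 2), x => 2 * x * hermiteC (n + 1) x - 2 * ((n : ℂ) + 1) * hermiteC n x

/-- The convolution `(f * g)(x) = ∫_0^x f(x−y) g(y) dy` of functions on `[0,∞)`. -/
noncomputable def rconv (f g : ℝ → ℝ) (x : ℝ) : ℝ := ∫ y in (0 : ℝ)..x, f (x - y) * g y

/-- The iterated convolution `ϖ_m = (√t e^{−t}) * (√t e^{−2t}) * ⋯ * (√t e^{−mt})`
(meaningful for `m ≥ 1`; the value at `0` is junk). -/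
noncomputable def varpi : ℕ → ℝ → ℝ
  | 0 => fun _ => 0
  | 1 => fun t => Real.sqrt t * Real.exp (-t)
  | (m + 2) => rconv (varpi (m + 1)) (fun t => Real.sqrt t * Real.exp (-((m : ℝ) + 2) * t))

lemma hermiteC_two_step (n : ℕ) (z : ℂ) :
    hermiteC (n + 2) z = 2 * z * hermiteC (n + 1) z - 2 * ((n : ℂ) + 1) * hermiteC n z := rfl

lemma hermiteC_succ (n : ℕ) (z : ℂ) :
    hermiteC (n + 1) z = 2 * z * hermiteC n z - 2 * (n : ℂ) * hermiteC (n - 1) z := by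
  cases n with
  | zero => simp [hermiteC]
  | succ n => rw [hermiteC_two_step]; push_cast; norm_num

lemma hermiteC_hasDerivAt : ∀ (n : ℕ) (z : ℂ),
    HasDerivAt (hermiteC n) (2 * (n : ℂ) * hermiteC (n - 1) z) z
  | 0, z => by
      show HasDerivAt (fun _ => (1:ℂ)) _ z
      simpa using hasDerivAt_const z (1 : ℂ)
  | 1, z => by
      have : HasDerivAt (hermiteC 1) (2 : ℂ) z := by
        show HasDerivAt (fun y : ℂ => 2 * y) (2 : ℂ) z
        simpa using (hasDerivAt_id z).const_mul (2 : ℂ)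
      simpa [hermiteC] using this
  | (n + 2), z => by
      have ih1 := hermiteC_hasDerivAt (n + 1) z
      have ih0 := hermiteC_hasDerivAt n z
      have h : HasDerivAt (hermiteC (n + 2))
          ((2 * hermiteC (n + 1) z + 2 * z * (2 * ((n : ℂ) + 1) * hermiteC n z))
            - 2 * ((n : ℂ) + 1) * (2 * (n : ℂ) * hermiteC (n - 1) z)) z := by
        have hmul : HasDerivAt (fun z : ℂ => 2 * z * hermiteC (n + 1) z)
            (2 * hermiteC (n + 1) z + 2 * z * (2 * ((n : ℂ) + 1) * hermiteC n z)) z := by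
          have h1 : HasDerivAt (fun z : ℂ => 2 * z) (2 : ℂ) z := by
            simpa using (hasDerivAt_id z).const_mul (2 : ℂ)
          have := h1.mul ih1
          simpa [Nat.add_sub_cancel, Pi.mul_def] using this
        have hsub := hmul.sub (ih0.const_mul (2 * ((n : ℂ) + 1)))
        have : hermiteC (n + 2) = fun z : ℂ =>
            2 * z * hermiteC (n + 1) z - 2 * ((n : ℂ) + 1) * hermiteC n z := rfl
        rw [this]
        exact hsub
      convert h using 1
      have h21 : n + 2 - 1 = n + 1 := rfl
      rw [h21, hermiteC_succ n z]
      push_cast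
      ring

lemma hermiteC_differentiable (n : ℕ) : Differentiable ℂ (hermiteC n) :=
  fun z => (hermiteC_hasDerivAt n z).differentiableAt

lemma hermiteC_continuous (n : ℕ) : Continuous (hermiteC n) :=
  (hermiteC_differentiable n).continuous

lemma hermiteC_norm_le : ∀ (n : ℕ) (z : ℂ),
    ‖hermiteC n z‖ ≤ Real.sqrt n.factorial * (2 * ‖z‖ + Real.sqrt 2) ^ n
  | 0, z => by simp [hermiteC]
  | 1, z => by
      have h2 : (0:ℝ) ≤ Real.sqrt 2 := Real.sqrt_nonneg 2
      simp only [hermiteC, Nat.factorial_one, Nat.cast_one, Real.sqrt_one, one_mul, pow_one]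
      rw [norm_mul]
      simp only [Complex.norm_ofNat]
      linarith
  | (n + 2), z => by
      have ih1 := hermiteC_norm_le (n + 1) z
      have ih0 := hermiteC_norm_le n z
      set a := ‖z‖ with ha
      set r := 2 * a + Real.sqrt 2 with hr
      have ha0 : (0:ℝ) ≤ a := norm_nonneg z
      have h2 : Real.sqrt 2 * Real.sqrt 2 = 2 := Real.mul_self_sqrt (by norm_num)
      have hs2 : (0:ℝ) ≤ Real.sqrt 2 := Real.sqrt_nonneg 2
      have hr0 : (0:ℝ) ≤ r := by positivity
      have hrs : Real.sqrt 2 ≤ r := by simp [hr]; positivity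
      -- factorial square roots
      have hfac1 : Real.sqrt ((n+1).factorial : ℝ)
          = Real.sqrt ((n:ℝ)+1) * Real.sqrt (n.factorial : ℝ) := by
        rw [← Real.sqrt_mul (by positivity)]
        congr 1
        rw [Nat.factorial_succ]; push_cast; ring
      have hfac2 : Real.sqrt ((n+2).factorial : ℝ)
          = Real.sqrt ((n:ℝ)+2) * Real.sqrt (((n+1).factorial : ℝ)) := by
        rw [← Real.sqrt_mul (by positivity)]
        congr 1
        rw [show n + 2 = (n+1) + 1 from rfl, Nat.factorial_succ]; push_cast; ring
      -- bound the recurrence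
      have hrec : ‖hermiteC (n + 2) z‖
          ≤ 2 * a * ‖hermiteC (n+1) z‖ + (2 * ((n:ℝ)+1)) * ‖hermiteC n z‖ := by
        have : hermiteC (n + 2) z
            = 2 * z * hermiteC (n + 1) z - 2 * ((n : ℂ) + 1) * hermiteC n z := rfl
        rw [this]
        refine (norm_sub_le _ _).trans (le_of_eq ?_)
        have hc : ‖((n:ℂ) + 1)‖ = (n:ℝ) + 1 := by
          rw [show ((n:ℂ) + 1) = ((n+1 : ℕ) : ℂ) by push_cast; ring, Complex.norm_natCast]
          push_cast; ring
        rw [norm_mul, norm_mul, norm_mul, norm_mul, hc]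
        simp only [Complex.norm_ofNat]
        try ring
      have hn1 : (0:ℝ) ≤ Real.sqrt ((n:ℝ)+1) := Real.sqrt_nonneg _
      have hn2 : (0:ℝ) ≤ Real.sqrt ((n:ℝ)+2) := Real.sqrt_nonneg _
      have hsq1 : Real.sqrt ((n:ℝ)+1) * Real.sqrt ((n:ℝ)+1) = (n:ℝ)+1 :=
        Real.mul_self_sqrt (by positivity)
      have h12 : Real.sqrt ((n:ℝ)+1) ≤ Real.sqrt ((n:ℝ)+2) := by
        apply Real.sqrt_le_sqrt; linarith
      have h1le : (1:ℝ) ≤ Real.sqrt ((n:ℝ)+2) := by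
        rw [show (1:ℝ) = Real.sqrt 1 from (Real.sqrt_one).symm]
        apply Real.sqrt_le_sqrt; push_cast; linarith
      have hsn : (0:ℝ) ≤ Real.sqrt (n.factorial : ℝ) := Real.sqrt_nonneg _
      have hrpow : (0:ℝ) ≤ r ^ n := pow_nonneg hr0 n
      -- key scalar inequality
      have hkey : 2 * a * r + 2 * Real.sqrt ((n:ℝ)+1) ≤ Real.sqrt ((n:ℝ)+2) * (r * r) := by
        have e1 : r * r = 2 * a * r + Real.sqrt 2 * r := by rw [hr]; ring
        have e2 : 2 * a * r ≤ Real.sqrt ((n:ℝ)+2) * (2 * a * r) := by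
          nlinarith [mul_nonneg (mul_nonneg (by linarith : (0:ℝ) ≤ 2*a) hr0) (sub_nonneg.mpr h1le)]
        have e3 : 2 * Real.sqrt ((n:ℝ)+1) ≤ Real.sqrt ((n:ℝ)+2) * (Real.sqrt 2 * r) := by
          have : Real.sqrt 2 * Real.sqrt 2 ≤ Real.sqrt 2 * r := by
            apply mul_le_mul_of_nonneg_left hrs hs2
          rw [h2] at this
          calc 2 * Real.sqrt ((n:ℝ)+1) ≤ 2 * Real.sqrt ((n:ℝ)+2) := by linarith
          _ = Real.sqrt ((n:ℝ)+2) * 2 := by ring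
          _ ≤ Real.sqrt ((n:ℝ)+2) * (Real.sqrt 2 * r) := by
              apply mul_le_mul_of_nonneg_left this hn2
        calc 2 * a * r + 2 * Real.sqrt ((n:ℝ)+1)
            ≤ Real.sqrt ((n:ℝ)+2) * (2 * a * r) + Real.sqrt ((n:ℝ)+2) * (Real.sqrt 2 * r) := by
              linarith
        _ = Real.sqrt ((n:ℝ)+2) * (r * r) := by rw [e1]; ring
      calc ‖hermiteC (n + 2) z‖
          ≤ 2 * a * ‖hermiteC (n+1) z‖ + (2 * ((n:ℝ)+1)) * ‖hermiteC n z‖ := hrec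
      _ ≤ 2 * a * (Real.sqrt ((n+1).factorial : ℝ) * r ^ (n+1))
            + (2 * ((n:ℝ)+1)) * (Real.sqrt (n.factorial : ℝ) * r ^ n) := by
          have t1 := mul_le_mul_of_nonneg_left ih1 (by linarith : (0:ℝ) ≤ 2*a)
          have t2 := mul_le_mul_of_nonneg_left ih0 (by positivity : (0:ℝ) ≤ 2*((n:ℝ)+1))
          linarith
      _ = (Real.sqrt ((n:ℝ)+1) * Real.sqrt (n.factorial : ℝ) * r ^ n)
            * (2 * a * r + 2 * Real.sqrt ((n:ℝ)+1)) := by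
          rw [hfac1, pow_succ]
          linear_combination (-2 * Real.sqrt ((n.factorial : ℕ) : ℝ) * r ^ n) * hsq1
      _ ≤ (Real.sqrt ((n:ℝ)+1) * Real.sqrt (n.factorial : ℝ) * r ^ n)
            * (Real.sqrt ((n:ℝ)+2) * (r * r)) := by
          apply mul_le_mul_of_nonneg_left hkey
          positivity
      _ = Real.sqrt ((n+2).factorial : ℝ) * r ^ (n+2) := by
          rw [hfac2, hfac1, pow_succ, pow_succ]
          ring

noncomputable def gfun (z : ℂ) (m : ℕ) : ℂ → ℂ :=
  fun w => Complex.exp (2 * z * w - w ^ 2) * hermiteC m (z - w)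

lemma gfun_hasDerivAt (z : ℂ) (m : ℕ) (w : ℂ) :
    HasDerivAt (gfun z m) (gfun z (m + 1) w) w := by
  have hexp : HasDerivAt (fun w : ℂ => Complex.exp (2 * z * w - w ^ 2))
      (Complex.exp (2 * z * w - w ^ 2) * (2 * z - 2 * w)) w := by
    have hin : HasDerivAt (fun w : ℂ => 2 * z * w - w ^ 2) (2 * z - 2 * w) w := by
      have h1 : HasDerivAt (fun w : ℂ => 2 * z * w) (2 * z) w := by
        simpa using (hasDerivAt_id w).const_mul (2 * z)
      have h2 : HasDerivAt (fun w : ℂ => w ^ 2) (2 * w) w := by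
        simpa using hasDerivAt_pow 2 w
      simpa [Pi.sub_def] using h1.sub h2
    exact hin.cexp
  have hherm : HasDerivAt (fun w : ℂ => hermiteC m (z - w))
      (2 * (m : ℂ) * hermiteC (m - 1) (z - w) * (-1)) w := by
    have hin : HasDerivAt (fun w : ℂ => z - w) (-1 : ℂ) w := by
      simpa [Pi.sub_def] using (hasDerivAt_const w z).sub (hasDerivAt_id w)
    exact (hermiteC_hasDerivAt m (z - w)).comp w hin
  have h := hexp.mul hherm
  have heq : Complex.exp (2 * z * w - w ^ 2) * (2 * z - 2 * w) * hermiteC m (z - w)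
      + Complex.exp (2 * z * w - w ^ 2) * (2 * (m : ℂ) * hermiteC (m - 1) (z - w) * (-1))
      = gfun z (m + 1) w := by
    unfold gfun
    rw [hermiteC_succ m (z - w)]
    ring
  rw [heq] at h
  exact h

lemma gfun_differentiable (z : ℂ) (m : ℕ) : Differentiable ℂ (gfun z m) :=
  fun w => (gfun_hasDerivAt z m w).differentiableAt

lemma iteratedDeriv_gfun (z : ℂ) (m : ℕ) : ∀ k : ℕ,
    iteratedDeriv k (gfun z m) = gfun z (m + k)
  | 0 => by simp [iteratedDeriv_zero]
  | (k + 1) => by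
      rw [iteratedDeriv_succ, iteratedDeriv_gfun z m k]
      funext w
      rw [show m + (k + 1) = (m + k) + 1 from rfl]
      exact (gfun_hasDerivAt z (m + k) w).deriv

lemma hermiteC_genfun (m : ℕ) (z w : ℂ) :
    HasSum (fun k : ℕ => hermiteC (k + m) z * w ^ k / (k.factorial : ℂ))
      (Complex.exp (2 * z * w - w ^ 2) * hermiteC m (z - w)) := by
  have h := Complex.hasSum_taylorSeries_of_entire (gfun_differentiable z m) 0 w
  have hiter : ∀ k : ℕ, iteratedDeriv k (gfun z m) 0 = hermiteC (k + m) z := by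
    intro k
    rw [iteratedDeriv_gfun z m k]
    unfold gfun
    rw [show m + k = k + m from Nat.add_comm m k]
    norm_num
  have hg : gfun z m w = Complex.exp (2 * z * w - w ^ 2) * hermiteC m (z - w) := rfl
  rw [hg] at h
  have hf : (fun k : ℕ => hermiteC (k + m) z * w ^ k / (k.factorial : ℂ))
      = fun k : ℕ => (k.factorial : ℂ)⁻¹ • (w - 0) ^ k • iteratedDeriv k (gfun z m) 0 := by
    funext k
    rw [hiter k, smul_eq_mul, smul_eq_mul, sub_zero]
    field_simp
  rw [hf]
  exact h

open scoped Convolution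

lemma vanish_integrable {f : ℝ → ℝ} (h0 : ∀ t ≤ (0:ℝ), f t = 0)
    (h : IntegrableOn f (Set.Ioi 0)) : Integrable f := by
  rw [← integrableOn_univ, ← Set.Iic_union_Ioi (a := (0:ℝ))]
  exact (integrableOn_zero.congr_fun (fun x hx => (h0 x hx).symm) measurableSet_Iic).union h

lemma vanish_integral_Ioi {E : Type*} [NormedAddCommGroup E] [NormedSpace ℝ E] {f : ℝ → E}
    (h0 : ∀ t ≤ (0:ℝ), f t = 0) : ∫ t in Set.Ioi 0, f t = ∫ t, f t :=
  setIntegral_eq_integral_of_forall_compl_eq_zero fun x hx => h0 x (by simpa using hx)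

lemma sqrt_exp_integrableOn {b : ℝ} (hb : 0 < b) :
    IntegrableOn (fun t : ℝ => Real.sqrt t * Real.exp (-(b * t))) (Set.Ioi 0) := by
  have hg : IntegrableOn (fun x : ℝ => Real.exp (-x) * x ^ ((1:ℝ)/2)) (Set.Ioi 0) := by
    have := Real.GammaIntegral_convergent (by norm_num : (0:ℝ) < 3/2)
    norm_num at this
    exact this
  have hcomp : IntegrableOn (fun t : ℝ => Real.exp (-(b*t)) * (b*t) ^ ((1:ℝ)/2))
      (Set.Ioi 0) := by
    have := (integrableOn_Ioi_comp_mul_left_iff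
      (fun x : ℝ => Real.exp (-x) * x ^ ((1:ℝ)/2)) 0 hb).2 (by simpa using hg)
    simpa using this
  have h2 := hcomp.const_mul (b ^ (-(1:ℝ)/2))
  apply IntegrableOn.congr_fun h2 ?_ measurableSet_Ioi
  intro t ht
  have ht' : (0:ℝ) < t := ht
  dsimp only
  rw [Real.mul_rpow hb.le ht'.le, Real.sqrt_eq_rpow]
  rw [show (-(1:ℝ)/2) = -((1:ℝ)/2) by norm_num, Real.rpow_neg hb.le]
  have hbp : (0:ℝ) < b ^ ((1:ℝ)/2) := Real.rpow_pos_of_pos hb _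
  field_simp

lemma sqrt_exp_vanish {c t : ℝ} (ht : t ≤ 0) : Real.sqrt t * Real.exp (c * t) = 0 := by
  rw [Real.sqrt_eq_zero'.2 ht, zero_mul]

lemma sqrt_mul_vanish {t : ℝ} (ht : t ≤ 0) (c : ℝ) : Real.sqrt t * c = 0 := by
  rw [Real.sqrt_eq_zero'.2 ht, zero_mul]

lemma sqrt_exp_integrable {b : ℝ} (hb : 0 < b) :
    Integrable (fun t : ℝ => Real.sqrt t * Real.exp (-(b * t))) := by
  apply vanish_integrable (fun t ht => ?_) (sqrt_exp_integrableOn hb)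
  simpa using sqrt_exp_vanish (c := -b) (t := t) ht

lemma Gamma_three_half : Real.Gamma ((3:ℝ)/2) = Real.sqrt Real.pi / 2 := by
  rw [show (3:ℝ)/2 = 1/2 + 1 by norm_num, Real.Gamma_add_one (by norm_num),
    Real.Gamma_one_half_eq]
  ring

lemma sqrt_exp_integral {b : ℝ} (hb : 0 < b) :
    ∫ t : ℝ, Real.sqrt t * Real.exp (-(b * t))
      = Real.sqrt Real.pi / 2 / b ^ ((3:ℝ)/2) := by
  rw [← vanish_integral_Ioi (fun t ht => by simpa using sqrt_exp_vanish (c := -b) (t := t) ht)]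
  have h1 : ∫ t in Set.Ioi (0:ℝ), Real.sqrt t * Real.exp (-(b * t))
      = ∫ t in Set.Ioi (0:ℝ), b ^ (-(1:ℝ)/2) * (Real.exp (-(b*t)) * (b*t) ^ ((1:ℝ)/2)) := by
    apply setIntegral_congr_fun measurableSet_Ioi
    intro t ht
    have ht' : (0:ℝ) < t := ht
    dsimp only
    rw [Real.mul_rpow hb.le ht'.le, Real.sqrt_eq_rpow]
    rw [show (-(1:ℝ)/2) = -((1:ℝ)/2) by norm_num, Real.rpow_neg hb.le]
    have hbp : (0:ℝ) < b ^ ((1:ℝ)/2) := Real.rpow_pos_of_pos hb _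
    field_simp
  rw [h1, integral_const_mul]
  have h2 : ∫ t in Set.Ioi (0:ℝ), Real.exp (-(b*t)) * (b*t) ^ ((1:ℝ)/2)
      = b⁻¹ * ∫ x in Set.Ioi (0:ℝ), Real.exp (-x) * x ^ ((1:ℝ)/2) := by
    have := integral_comp_mul_left_Ioi (fun x : ℝ => Real.exp (-x) * x ^ ((1:ℝ)/2)) 0 hb
    simp only [mul_zero] at this
    rw [this, smul_eq_mul]
  rw [h2]
  have h3 : ∫ x in Set.Ioi (0:ℝ), Real.exp (-x) * x ^ ((1:ℝ)/2) = Real.sqrt Real.pi / 2 := by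
    rw [← Gamma_three_half, Real.Gamma_eq_integral (by norm_num : (0:ℝ) < 3/2)]
    norm_num
  rw [h3]
  rw [show ((3:ℝ)/2) = 1 + (1:ℝ)/2 by norm_num, Real.rpow_add hb, Real.rpow_one]
  rw [show (-(1:ℝ)/2) = -((1:ℝ)/2) by norm_num, Real.rpow_neg hb.le]
  have hbp : (0:ℝ) < b ^ ((1:ℝ)/2) := Real.rpow_pos_of_pos hb _
  field_simp
  try exact Or.inl trivial

lemma varpi_two_step (m : ℕ) : varpi (m + 2)
    = rconv (varpi (m + 1)) (fun t => Real.sqrt t * Real.exp (-((m : ℝ) + 2) * t)) := rfl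

lemma varpi_zero_of_nonpos : ∀ (m : ℕ), ∀ t ≤ (0:ℝ), varpi (m+1) t = 0
  | 0, t, ht => by
      show Real.sqrt t * Real.exp (-t) = 0
      rw [Real.sqrt_eq_zero'.2 ht, zero_mul]
  | (m+1), t, ht => by
      rw [varpi_two_step, rconv, intervalIntegral.integral_symm,
        intervalIntegral.integral_of_le ht]
      rw [setIntegral_eq_zero_of_forall_eq_zero, neg_zero]
      intro y hy
      have hy0 : y ≤ 0 := hy.2
      rw [sqrt_exp_vanish hy0, mul_zero]

lemma varpi_nonneg : ∀ (m : ℕ) (t : ℝ), 0 ≤ varpi (m+1) t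
  | 0, t => by
      show 0 ≤ Real.sqrt t * Real.exp (-t)
      positivity
  | (m+1), t => by
      rcases le_or_gt t 0 with ht | ht
      · rw [varpi_zero_of_nonpos (m+1) t ht]
      · rw [varpi_two_step, rconv]
        apply intervalIntegral.integral_nonneg ht.le
        intro y _
        have h1 := varpi_nonneg m (t - y)
        positivity

lemma varpi_laplace : ∀ (m : ℕ) (a : ℝ), 0 ≤ a →
    Integrable (fun t : ℝ => varpi (m+1) t * Real.exp (-(a*t))) ∧
    ∫ t : ℝ, varpi (m+1) t * Real.exp (-(a*t))
      = ∏ j ∈ Finset.Icc 1 (m+1), (Real.sqrt Real.pi / 2 / ((a + (j:ℝ)) ^ ((3:ℝ)/2)))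
  | 0, a, ha => by
      have hb : (0:ℝ) < a + 1 := by linarith
      have hfe : (fun t : ℝ => varpi 1 t * Real.exp (-(a*t)))
          = fun t : ℝ => Real.sqrt t * Real.exp (-((a+1) * t)) := by
        funext t
        show Real.sqrt t * Real.exp (-t) * Real.exp (-(a*t)) = _
        rw [mul_assoc, ← Real.exp_add]
        congr 2
        ring
      constructor
      · rw [hfe]; exact sqrt_exp_integrable hb
      · rw [hfe, sqrt_exp_integral hb]
        rw [show (0:ℕ)+1 = 1 from rfl, Finset.Icc_self, Finset.prod_singleton]
        norm_num
  | (m+1), a, ha => by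
      have ihm := varpi_laplace m a ha
      set L := ContinuousLinearMap.mul ℝ ℝ with hL
      set Fa := fun t : ℝ => varpi (m+1) t * Real.exp (-(a*t)) with hFa
      set bb := ((m:ℝ) + 2) + a with hbb
      have hbbpos : (0:ℝ) < bb := by rw [hbb]; positivity
      set Ga := fun t : ℝ => Real.sqrt t * Real.exp (-(bb * t)) with hGa
      have hFaInt : Integrable Fa := ihm.1
      have hGaInt : Integrable Ga := sqrt_exp_integrable hbbpos
      have key : ∀ x : ℝ, varpi (m+2) x * Real.exp (-(a*x)) = (Fa ⋆[L] Ga) x := by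
        intro x
        rcases le_or_gt x 0 with hx | hx
        · rw [varpi_zero_of_nonpos (m+1) x hx, zero_mul, convolution_def]
          rw [show (fun t : ℝ => L (Fa t) (Ga (x - t))) = fun _ => (0:ℝ) from ?_, integral_zero]
          funext t
          simp only [hL, ContinuousLinearMap.mul_apply']
          rcases le_or_gt t 0 with ht | ht
          · rw [hFa]; dsimp only
            rw [varpi_zero_of_nonpos m t ht, zero_mul, zero_mul]
          · rw [hGa]; dsimp only
            rw [sqrt_mul_vanish (by linarith : x - t ≤ 0), mul_zero]
        · -- x > 0
          have stepA : varpi (m+2) x * Real.exp (-(a*x))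
              = ∫ y in (0:ℝ)..x, Fa (x - y) * Ga y := by
            rw [varpi_two_step, rconv, mul_comm, ← intervalIntegral.integral_const_mul]
            apply intervalIntegral.integral_congr
            intro y _
            dsimp only
            rw [hFa, hGa]; dsimp only
            have h1 : Real.exp (-(a*x)) * Real.exp (-((m:ℝ)+2)*y)
                = Real.exp (-(a*(x-y))) * Real.exp (-(bb*y)) := by
              rw [← Real.exp_add, ← Real.exp_add]
              congr 1
              rw [hbb]; ring
            calc Real.exp (-(a * x)) * (varpi (m+1) (x - y) * (Real.sqrt y * Real.exp (-((m:ℝ)+2)*y)))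
                = (varpi (m+1) (x - y) * Real.sqrt y) *
                    (Real.exp (-(a*x)) * Real.exp (-((m:ℝ)+2)*y)) := by ring
              _ = (varpi (m+1) (x - y) * Real.sqrt y) *
                    (Real.exp (-(a*(x-y))) * Real.exp (-(bb*y))) := by rw [h1]
              _ = varpi (m+1) (x - y) * Real.exp (-(a*(x-y))) * (Real.sqrt y * Real.exp (-(bb*y))) := by
                    ring
          have stepB : (∫ y in (0:ℝ)..x, Fa (x - y) * Ga y)
              = ∫ t in (0:ℝ)..x, Fa t * Ga (x - t) := by
            have heq : ∀ y : ℝ, Fa (x - y) * Ga y = (fun t => Fa t * Ga (x - t)) (x - y) := by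
              intro y; dsimp only; rw [sub_sub_cancel]
            simp_rw [heq]
            rw [intervalIntegral.integral_comp_sub_left (fun t => Fa t * Ga (x - t)) x]
            simp
          have stepC : (∫ t in (0:ℝ)..x, Fa t * Ga (x - t))
              = ∫ t : ℝ, Fa t * Ga (x - t) := by
            rw [intervalIntegral.integral_of_le hx.le]
            apply setIntegral_eq_integral_of_forall_compl_eq_zero
            intro t ht
            simp only [Set.mem_Ioc, not_and_or, not_lt, not_le] at ht
            rcases ht with ht | ht
            · rw [hFa]; dsimp only
              rw [varpi_zero_of_nonpos m t ht, zero_mul, zero_mul]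
            · rw [hGa]; dsimp only
              rw [sqrt_mul_vanish (by linarith : x - t ≤ 0), mul_zero]
          rw [stepA, stepB, stepC, convolution_def]
          simp only [hL, ContinuousLinearMap.mul_apply']
      have hconv_eq : (fun x : ℝ => varpi (m+2) x * Real.exp (-(a*x))) = (Fa ⋆[L] Ga) :=
        funext key
      constructor
      · rw [hconv_eq]
        exact hFaInt.integrable_convolution L hGaInt
      · rw [show (∫ t : ℝ, varpi (m+1+1) t * Real.exp (-(a*t)))
            = ∫ x : ℝ, (Fa ⋆[L] Ga) x from by rw [← hconv_eq]]
        rw [integral_convolution L hFaInt hGaInt]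
        simp only [hL, ContinuousLinearMap.mul_apply']
        rw [ihm.2, hGa]
        rw [show (fun t : ℝ => Real.sqrt t * Real.exp (-(bb*t)))
            = fun t : ℝ => Real.sqrt t * Real.exp (-(bb*t)) from rfl]
        rw [sqrt_exp_integral hbbpos]
        rw [Finset.prod_Icc_succ_top (by omega : 1 ≤ m + 1 + 1)]
        congr 2
        rw [hbb]
        push_cast
        ring

lemma prod_Icc_pos (k m : ℕ) : 0 < ∏ j ∈ Finset.Icc 1 m, ((k:ℝ)+(j:ℝ)) := by
  apply Finset.prod_pos
  intro j hj
  have : 1 ≤ j := (Finset.mem_Icc.1 hj).1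
  have : (1:ℝ) ≤ (j:ℝ) := by exact_mod_cast this
  positivity

lemma prod_Icc_one_le (k m : ℕ) : 1 ≤ ∏ j ∈ Finset.Icc 1 m, ((k:ℝ)+(j:ℝ)) := by
  calc (1:ℝ) = ∏ _j ∈ Finset.Icc 1 m, (1:ℝ) := (Finset.prod_const_one).symm
  _ ≤ ∏ j ∈ Finset.Icc 1 m, ((k:ℝ)+(j:ℝ)) := by
      apply Finset.prod_le_prod
      · intro j hj; norm_num
      · intro j hj
        have h1 : 1 ≤ j := (Finset.mem_Icc.1 hj).1
        have h2 : (1:ℝ) ≤ (j:ℝ) := by exact_mod_cast h1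
        have h3 : (0:ℝ) ≤ (k:ℝ) := Nat.cast_nonneg k
        linarith

lemma fac_prod_Icc (k : ℕ) : ∀ (m : ℕ), (((k+m).factorial : ℝ))
    = (k.factorial : ℝ) * ∏ j ∈ Finset.Icc 1 m, ((k:ℝ)+(j:ℝ))
  | 0 => by simp
  | (m+1) => by
      rw [Finset.prod_Icc_succ_top (by omega : 1 ≤ m + 1)]
      rw [show k + (m+1) = (k+m) + 1 from rfl, Nat.factorial_succ]
      push_cast
      rw [fac_prod_Icc k m]
      ring

lemma summable_pow_div_sqrt_factorial {q : ℝ} (hq : 0 ≤ q) :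
    Summable (fun k : ℕ => q ^ k / Real.sqrt ((k.factorial : ℝ))) := by
  apply summable_of_ratio_norm_eventually_le (r := 1/2) (by norm_num)
  rw [Filter.eventually_atTop]
  refine ⟨⌈(2*q)^2⌉₊, fun k hk => ?_⟩
  have hsk : (0:ℝ) < Real.sqrt ((k.factorial : ℝ)) := by
    apply Real.sqrt_pos.2
    exact_mod_cast k.factorial_pos
  have hsk1 : (0:ℝ) < Real.sqrt ((k:ℝ)+1) := by
    apply Real.sqrt_pos.2; positivity
  have h2q : 2*q ≤ Real.sqrt ((k:ℝ)+1) := by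
    have h1 : ((2*q)^2 : ℝ) ≤ (k:ℝ)+1 := by
      calc ((2*q)^2 : ℝ) ≤ (⌈(2*q)^2⌉₊ : ℝ) := Nat.le_ceil _
      _ ≤ (k:ℝ) := by exact_mod_cast hk
      _ ≤ (k:ℝ)+1 := by linarith
    calc 2*q = Real.sqrt ((2*q)^2) := (Real.sqrt_sq (by linarith)).symm
    _ ≤ Real.sqrt ((k:ℝ)+1) := Real.sqrt_le_sqrt h1
  have hsplit : Real.sqrt (((k+1).factorial : ℝ))
      = Real.sqrt ((k:ℝ)+1) * Real.sqrt ((k.factorial : ℝ)) := by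
    rw [← Real.sqrt_mul (by positivity)]
    congr 1
    rw [Nat.factorial_succ]; push_cast; ring
  have hqd : q / Real.sqrt ((k:ℝ)+1) ≤ 1/2 := by
    rw [div_le_iff₀ hsk1]; linarith
  rw [Real.norm_eq_abs, Real.norm_eq_abs, abs_of_nonneg (by positivity),
    abs_of_nonneg (by positivity)]
  calc q ^ (k+1) / Real.sqrt (((k+1).factorial : ℝ))
      = (q / Real.sqrt ((k:ℝ)+1)) * (q ^ k / Real.sqrt ((k.factorial : ℝ))) := by
        rw [hsplit, pow_succ]; ring
  _ ≤ (1/2) * (q ^ k / Real.sqrt ((k.factorial : ℝ))) :=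
      mul_le_mul_of_nonneg_right hqd (by positivity)

lemma norm_term_eq (m k : ℕ) (x : ℝ) (s : ℂ) :
    ‖hermiteC (k + m) (x : ℂ) * s ^ k /
        ((k.factorial : ℂ) *
          ((((∏ j ∈ Finset.Icc 1 m, ((k : ℝ) + (j : ℝ))) ^ ((3 : ℝ) / 2)) : ℝ) : ℂ))‖
      = ‖hermiteC (k + m) (x : ℂ)‖ * ‖s‖ ^ k /
          ((k.factorial : ℝ) * (∏ j ∈ Finset.Icc 1 m, ((k : ℝ) + (j : ℝ))) ^ ((3 : ℝ) / 2)) := by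
  have hP := prod_Icc_pos k m
  have hPr : (0:ℝ) < (∏ j ∈ Finset.Icc 1 m, ((k : ℝ) + (j : ℝ))) ^ ((3 : ℝ) / 2) :=
    Real.rpow_pos_of_pos hP _
  rw [norm_div, norm_mul, norm_mul, norm_pow, Complex.norm_natCast, Complex.norm_real,
    Real.norm_eq_abs, abs_of_pos hPr]

lemma term_le (m k : ℕ) (x : ℝ) (s : ℂ) :
    ‖hermiteC (k + m) (x : ℂ)‖ * ‖s‖ ^ k /
          ((k.factorial : ℝ) * (∏ j ∈ Finset.Icc 1 m, ((k : ℝ) + (j : ℝ))) ^ ((3 : ℝ) / 2))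
      ≤ (2 * ‖(x:ℂ)‖ + Real.sqrt 2) ^ m *
          (((2 * ‖(x:ℂ)‖ + Real.sqrt 2) * ‖s‖) ^ k / Real.sqrt ((k.factorial : ℝ))) := by
  set r := 2 * ‖(x:ℂ)‖ + Real.sqrt 2 with hr
  have hr0 : (0:ℝ) < r := by
    have := Real.sqrt_pos.2 (by norm_num : (0:ℝ) < 2)
    have := norm_nonneg (x:ℂ)
    rw [hr]; linarith
  set P := ∏ j ∈ Finset.Icc 1 m, ((k:ℝ)+(j:ℝ)) with hPdef
  have hPpos : 0 < P := prod_Icc_pos k m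
  have hP1 : 1 ≤ P := prod_Icc_one_le k m
  have hfacpos : (0:ℝ) < (k.factorial : ℝ) := by exact_mod_cast k.factorial_pos
  set S := Real.sqrt ((k.factorial : ℝ)) with hS
  set Q := Real.sqrt P with hQ
  have hSpos : 0 < S := Real.sqrt_pos.2 hfacpos
  have hQpos : 0 < Q := Real.sqrt_pos.2 hPpos
  have e1 : Real.sqrt (((k+m).factorial : ℝ)) = S * Q := by
    rw [hS, hQ, ← Real.sqrt_mul hfacpos.le, ← fac_prod_Icc k m]
  have e2 : ((k.factorial : ℝ)) = S * S := (Real.mul_self_sqrt hfacpos.le).symm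
  have e3 : P ^ ((3:ℝ)/2) = P * Q := by
    rw [show (3:ℝ)/2 = 1 + 1/2 by norm_num, Real.rpow_add hPpos, Real.rpow_one, hQ,
      Real.sqrt_eq_rpow]
  have hH : ‖hermiteC (k + m) (x : ℂ)‖ ≤ S * Q * r ^ (k+m) := by
    rw [← e1]; exact hermiteC_norm_le (k+m) (x:ℂ)
  rw [div_le_iff₀ (by positivity)]
  calc ‖hermiteC (k + m) (x : ℂ)‖ * ‖s‖ ^ k ≤ (S * Q * r ^ (k+m)) * ‖s‖ ^ k :=
        mul_le_mul_of_nonneg_right hH (by positivity)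
  _ ≤ ((S * Q * r ^ (k+m)) * ‖s‖ ^ k) * P := le_mul_of_one_le_right (by positivity) hP1
  _ = r ^ m * ((r * ‖s‖) ^ k / S) * ((k.factorial : ℝ) * P ^ ((3:ℝ)/2)) := by
      rw [e3, pow_add, mul_pow]
      rw [e2]
      field_simp

lemma integral_ofReal'' {μ : Measure ℝ} (f : ℝ → ℝ) :
    ∫ t, ((f t : ℝ) : ℂ) ∂μ = ((∫ t, f t ∂μ : ℝ) : ℂ) :=
  integral_ofReal

lemma laplace_prod_eq (m k : ℕ) :
    (∏ j ∈ Finset.Icc 1 m, (Real.sqrt Real.pi / 2 / (((k:ℝ) + (j:ℝ)) ^ ((3:ℝ)/2))))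
      = (Real.sqrt Real.pi / 2) ^ m
          / (∏ j ∈ Finset.Icc 1 m, ((k:ℝ)+(j:ℝ))) ^ ((3:ℝ)/2) := by
  rw [Finset.prod_div_distrib, Finset.prod_const,
    Real.finset_prod_rpow _ _ (fun j hj => by positivity) _]
  congr 2
  simp [Nat.card_Icc]

lemma summable_norm_term (m : ℕ) (x : ℝ) (s : ℂ) :
    Summable (fun k : ℕ =>
      ‖hermiteC (k + m) (x : ℂ) * s ^ k /
        ((k.factorial : ℂ) *
          ((((∏ j ∈ Finset.Icc 1 m, ((k : ℝ) + (j : ℝ))) ^ ((3 : ℝ) / 2)) : ℝ) : ℂ))‖) := by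
  set r := 2 * ‖(x:ℂ)‖ + Real.sqrt 2 with hr
  have hq : (0:ℝ) ≤ r * ‖s‖ := by
    have h1 : (0:ℝ) ≤ Real.sqrt 2 := Real.sqrt_nonneg 2
    have h2 : (0:ℝ) ≤ ‖(x:ℂ)‖ := norm_nonneg _
    have h3 : (0:ℝ) ≤ ‖s‖ := norm_nonneg _
    positivity
  apply Summable.of_nonneg_of_le (fun k => norm_nonneg _)
    (fun k => ?_) ((summable_pow_div_sqrt_factorial hq).mul_left (r ^ m))
  rw [norm_term_eq]
  exact term_le m k x s


lemma hasSum_integrand (m : ℕ) (x : ℝ) (s : ℂ) (t : ℝ) :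
    HasSum (fun k : ℕ => ((varpi m t * Real.exp (-((k:ℝ)*t)) : ℝ) : ℂ) *
        (hermiteC (k + m) (x:ℂ) * s ^ k / (k.factorial : ℂ)))
      (((varpi m t : ℝ) : ℂ) *
        (Complex.exp (2 * (x:ℂ) * s * ((Real.exp (-t) : ℝ) : ℂ)
            - s ^ 2 * ((Real.exp (-2 * t) : ℝ) : ℂ)) *
          hermiteC m ((x:ℂ) - s * ((Real.exp (-t) : ℝ) : ℂ)))) := by
  have h := (hermiteC_genfun m (x:ℂ) (s * ((Real.exp (-t) : ℝ) : ℂ))).mul_left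
      ((varpi m t : ℝ) : ℂ)
  have hek : ∀ k : ℕ, Real.exp (-((k:ℝ)*t)) = (Real.exp (-t))^k := by
    intro k; rw [← Real.exp_nat_mul]; congr 1; ring
  have hfun : (fun k : ℕ => ((varpi m t : ℝ):ℂ) *
      (hermiteC (k+m) (x:ℂ) * (s * ((Real.exp (-t):ℝ):ℂ))^k / (k.factorial : ℂ)))
      = fun k : ℕ => ((varpi m t * Real.exp (-((k:ℝ)*t)) : ℝ) : ℂ) *
        (hermiteC (k + m) (x:ℂ) * s ^ k / (k.factorial : ℂ)) := by
    funext k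
    rw [hek k]
    push_cast
    ring
  have he2 : ((Real.exp (-2*t) : ℝ) : ℂ) = (((Real.exp (-t) : ℝ) : ℂ))^2 := by
    rw [← Complex.ofReal_pow]
    congr 1
    rw [show (-2*t) = ((2:ℕ):ℝ)*(-t) by push_cast; ring, Real.exp_nat_mul]
  have hval : ((varpi m t : ℝ):ℂ) *
      (Complex.exp (2*(x:ℂ)*(s*((Real.exp (-t):ℝ):ℂ)) - (s*((Real.exp (-t):ℝ):ℂ))^2) *
        hermiteC m ((x:ℂ) - s*((Real.exp (-t):ℝ):ℂ)))
      = (((varpi m t : ℝ) : ℂ) *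
        (Complex.exp (2 * (x:ℂ) * s * ((Real.exp (-t) : ℝ) : ℂ)
            - s ^ 2 * ((Real.exp (-2 * t) : ℝ) : ℂ)) *
          hermiteC m ((x:ℂ) - s * ((Real.exp (-t) : ℝ) : ℂ)))) := by
    congr 2
    rw [he2]
    ring
  rw [hfun, hval] at h
  exact h

theorem stmt14_aux (n : ℕ) (x : ℝ) (s : ℂ) :
    Summable (fun k : ℕ =>
      ‖hermiteC (k + (n+1)) (x : ℂ) * s ^ k /
        ((k.factorial : ℂ) *
          ((((∏ j ∈ Finset.Icc 1 (n+1), ((k : ℝ) + (j : ℝ))) ^ ((3 : ℝ) / 2)) : ℝ) : ℂ))‖) ∧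
    IntegrableOn (fun t : ℝ =>
      ((varpi (n+1) t : ℝ) : ℂ) *
        (Complex.exp (2 * (x : ℂ) * s * ((Real.exp (-t) : ℝ) : ℂ)
            - s ^ 2 * ((Real.exp (-2 * t) : ℝ) : ℂ)) *
          hermiteC (n+1) ((x : ℂ) - s * ((Real.exp (-t) : ℝ) : ℂ)))) (Set.Ioi 0) ∧
    (∑' k : ℕ, hermiteC (k + (n+1)) (x : ℂ) * s ^ k /
        ((k.factorial : ℂ) *
          ((((∏ j ∈ Finset.Icc 1 (n+1), ((k : ℝ) + (j : ℝ))) ^ ((3 : ℝ) / 2)) : ℝ) : ℂ))) =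
      (((2 / Real.sqrt Real.pi) ^ (n+1) : ℝ) : ℂ) *
        ∫ t in Set.Ioi (0 : ℝ),
          ((varpi (n+1) t : ℝ) : ℂ) *
            (Complex.exp (2 * (x : ℂ) * s * ((Real.exp (-t) : ℝ) : ℂ)
                - s ^ 2 * ((Real.exp (-2 * t) : ℝ) : ℂ)) *
              hermiteC (n+1) ((x : ℂ) - s * ((Real.exp (-t) : ℝ) : ℂ))) := by
  set m := n + 1 with hm
  set z : ℂ := (x : ℂ) with hz
  set ψ : ℝ → ℂ := fun t =>
    Complex.exp (2 * z * s * ((Real.exp (-t) : ℝ) : ℂ)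
      - s ^ 2 * ((Real.exp (-2 * t) : ℝ) : ℂ)) *
      hermiteC m (z - s * ((Real.exp (-t) : ℝ) : ℂ)) with hψdef
  have hsum := summable_norm_term m x s
  refine ⟨hsum, ?_, ?_⟩
  case _ =>
    have hϖint : Integrable (varpi m) := by
      have h := (varpi_laplace n 0 le_rfl).1
      have he : (fun t : ℝ => varpi m t * Real.exp (-(0*t))) = varpi m := by
        funext t; simp
      rwa [he] at h
    set C1 := Real.exp (2*‖z‖*‖s‖ + ‖s‖^2) with hC1
    set C2 := Real.sqrt ((m.factorial : ℝ)) * (2*(‖z‖+‖s‖) + Real.sqrt 2)^m with hC2def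
    have hψc : Continuous ψ := by
      have hc1 : Continuous fun t : ℝ => ((Real.exp (-t) : ℝ) : ℂ) :=
        Complex.continuous_ofReal.comp (Real.continuous_exp.comp continuous_neg)
      have hc2 : Continuous fun t : ℝ => ((Real.exp (-2*t) : ℝ) : ℂ) :=
        Complex.continuous_ofReal.comp (Real.continuous_exp.comp (by continuity))
      have harg : Continuous fun t : ℝ =>
          2*z*s*((Real.exp (-t):ℝ):ℂ) - s^2*((Real.exp (-2*t):ℝ):ℂ) :=
        (continuous_const.mul hc1).sub (continuous_const.mul hc2)
      exact (Complex.continuous_exp.comp harg).mul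
        ((hermiteC_continuous m).comp (continuous_const.sub (continuous_const.mul hc1)))
    apply Integrable.mono' ((hϖint.mul_const (C1*C2)).restrict)
    · exact (Complex.continuous_ofReal.comp_aestronglyMeasurable
        hϖint.aestronglyMeasurable.restrict).mul hψc.aestronglyMeasurable.restrict
    · rw [ae_restrict_iff' measurableSet_Ioi]
      apply ae_of_all
      intro t ht
      have ht' : (0:ℝ) < t := ht
      have he1pos : 0 < Real.exp (-t) := Real.exp_pos _
      have he2pos : 0 < Real.exp (-2*t) := Real.exp_pos _
      have he1le : Real.exp (-t) ≤ 1 := by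
        rw [show (1:ℝ) = Real.exp 0 from (Real.exp_zero).symm]
        exact Real.exp_le_exp.2 (by linarith)
      have he2le : Real.exp (-2*t) ≤ 1 := by
        rw [show (1:ℝ) = Real.exp 0 from (Real.exp_zero).symm]
        exact Real.exp_le_exp.2 (by linarith)
      have hsnn : (0:ℝ) ≤ ‖s‖ := norm_nonneg s
      have hznn : (0:ℝ) ≤ ‖z‖ := norm_nonneg z
      set w : ℂ := 2*z*s*((Real.exp (-t):ℝ):ℂ) - s^2*((Real.exp (-2*t):ℝ):ℂ) with hw
      have hwre : w.re ≤ 2*‖z‖*‖s‖ + ‖s‖^2 := by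
        calc w.re ≤ ‖w‖ := by exact Complex.re_le_norm w
        _ ≤ ‖2*z*s*((Real.exp (-t):ℝ):ℂ)‖ + ‖s^2*((Real.exp (-2*t):ℝ):ℂ)‖ := norm_sub_le _ _
        _ = (2*‖z‖*‖s‖)*Real.exp (-t) + ‖s‖^2*Real.exp (-2*t) := by
            simp only [norm_mul, norm_pow, Complex.norm_real, Complex.norm_ofNat,
              Real.norm_eq_abs, abs_of_pos he1pos, abs_of_pos he2pos]
            try ring
        _ ≤ (2*‖z‖*‖s‖)*1 + ‖s‖^2*1 := by gcongr <;> positivity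
        _ = 2*‖z‖*‖s‖ + ‖s‖^2 := by ring
      have hexpb : ‖Complex.exp w‖ ≤ C1 := by
        rw [Complex.norm_exp, hC1]
        exact Real.exp_le_exp.2 hwre
      have hHb : ‖hermiteC m (z - s*((Real.exp (-t):ℝ):ℂ))‖ ≤ C2 := by
        refine (hermiteC_norm_le m _).trans ?_
        rw [hC2def]
        have hbase : ‖z - s*((Real.exp (-t):ℝ):ℂ)‖ ≤ ‖z‖ + ‖s‖ := by
          calc ‖z - s*((Real.exp (-t):ℝ):ℂ)‖ ≤ ‖z‖ + ‖s*((Real.exp (-t):ℝ):ℂ)‖ :=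
                norm_sub_le _ _
          _ = ‖z‖ + ‖s‖ * Real.exp (-t) := by
              simp only [norm_mul, Complex.norm_real, Real.norm_eq_abs, abs_of_pos he1pos]
          _ ≤ ‖z‖ + ‖s‖ * 1 := by gcongr
          _ = ‖z‖ + ‖s‖ := by ring
        have hs2 : (0:ℝ) ≤ Real.sqrt 2 := Real.sqrt_nonneg 2
        apply mul_le_mul_of_nonneg_left ?_ (Real.sqrt_nonneg _)
        apply pow_le_pow_left₀ (by positivity) (by linarith [hbase])
      have hϖnn : (0:ℝ) ≤ varpi m t := varpi_nonneg n t
      calc ‖((varpi m t : ℝ) : ℂ) * ψ t‖ = varpi m t * ‖ψ t‖ := by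
            rw [norm_mul, Complex.norm_real, Real.norm_eq_abs, abs_of_nonneg hϖnn]
      _ = varpi m t * (‖Complex.exp w‖ * ‖hermiteC m (z - s*((Real.exp (-t):ℝ):ℂ))‖) := by
            rw [hψdef]; dsimp only; rw [norm_mul]
      _ ≤ varpi m t * (C1 * C2) := by
            apply mul_le_mul_of_nonneg_left ?_ hϖnn
            apply mul_le_mul hexpb hHb (norm_nonneg _) ?_
            rw [hC1]; positivity
  case _ =>
    simp only [hψdef, hz]
    set P : ℕ → ℝ := fun k => ∏ j ∈ Finset.Icc 1 m, ((k:ℝ)+(j:ℝ)) with hPdef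
    have hPpos : ∀ k, 0 < P k := fun k => prod_Icc_pos k m
    have hP32pos : ∀ k, 0 < (P k) ^ ((3:ℝ)/2) := fun k => Real.rpow_pos_of_pos (hPpos k) _
    set F : ℕ → ℝ → ℂ := fun k t => ((varpi m t * Real.exp (-((k:ℝ)*t)) : ℝ) : ℂ) *
        (hermiteC (k + m) (x:ℂ) * s ^ k / (k.factorial : ℂ)) with hFdef
    set g : ℕ → ℝ → ℝ := fun k t => varpi m t * Real.exp (-((k:ℝ)*t)) with hgdef
    have hgint : ∀ k : ℕ, Integrable (g k) := fun k =>
      (varpi_laplace n (k:ℝ) (Nat.cast_nonneg k)).1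
    have hgzero : ∀ k : ℕ, ∀ t ≤ (0:ℝ), g k t = 0 := by
      intro k t ht
      rw [hgdef]; dsimp only
      rw [varpi_zero_of_nonpos n t ht, zero_mul]
    have hgval : ∀ k : ℕ, ∫ t in Set.Ioi (0:ℝ), g k t
        = (Real.sqrt Real.pi/2)^m / (P k)^((3:ℝ)/2) := by
      intro k
      rw [vanish_integral_Ioi (hgzero k)]
      rw [(varpi_laplace n (k:ℝ) (Nat.cast_nonneg k)).2]
      exact laplace_prod_eq m k
    have hgnonneg : ∀ k t, 0 ≤ g k t := fun k t =>
      mul_nonneg (varpi_nonneg n t) (Real.exp_pos _).le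
    have hFint : ∀ k : ℕ, Integrable (F k) (volume.restrict (Set.Ioi 0)) := by
      intro k
      exact ((hgint k).restrict.ofReal).mul_const _
    have hFnorm : ∀ k : ℕ, (∫ t in Set.Ioi (0:ℝ), ‖F k t‖)
        = (∫ t in Set.Ioi (0:ℝ), g k t) * ‖hermiteC (k + m) (x:ℂ) * s ^ k / (k.factorial : ℂ)‖ := by
      intro k
      rw [← integral_mul_const]
      apply setIntegral_congr_fun measurableSet_Ioi
      intro t _
      rw [hFdef]; dsimp only
      rw [norm_mul, Complex.norm_real, Real.norm_eq_abs, abs_of_nonneg (hgnonneg k t)]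
    have hcknorm : ∀ k : ℕ, ‖hermiteC (k + m) (x:ℂ) * s ^ k / (k.factorial : ℂ)‖
        = ‖hermiteC (k + m) (x:ℂ)‖ * ‖s‖^k / (k.factorial : ℝ) := by
      intro k
      rw [norm_div, norm_mul, norm_pow, Complex.norm_natCast]
    have hsum2 : Summable (fun k : ℕ => ∫ t in Set.Ioi (0:ℝ), ‖F k t‖) := by
      apply (hsum.mul_left ((Real.sqrt Real.pi/2)^m)).congr
      intro k
      rw [hFnorm k, hgval k, hcknorm k, norm_term_eq]
      have h1 : ((k.factorial : ℝ)) ≠ 0 := by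
        have := k.factorial_pos; positivity
      have h2 : (P k) ^ ((3:ℝ)/2) ≠ 0 := ne_of_gt (hP32pos k)
      rw [show ((∏ j ∈ Finset.Icc 1 m, ((k:ℝ) + (j:ℝ))) ^ ((3:ℝ)/2)) = (P k) ^ ((3:ℝ)/2) from rfl]
      field_simp
      try ring
      try exact Or.inl trivial
    have hswap := MeasureTheory.integral_tsum_of_summable_integral_norm hFint hsum2
    have hptw : (fun t : ℝ => ((varpi m t : ℝ) : ℂ) *
        (Complex.exp (2 * (x:ℂ) * s * ((Real.exp (-t) : ℝ) : ℂ)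
            - s ^ 2 * ((Real.exp (-2 * t) : ℝ) : ℂ)) *
          hermiteC m ((x:ℂ) - s * ((Real.exp (-t) : ℝ) : ℂ))))
        = fun t : ℝ => ∑' k : ℕ, F k t := by
      funext t
      exact (hasSum_integrand m x s t).tsum_eq.symm
    rw [hptw, ← hswap]
    have hFkint : ∀ k : ℕ, (∫ t in Set.Ioi (0:ℝ), F k t)
        = (((Real.sqrt Real.pi/2)^m / (P k)^((3:ℝ)/2) : ℝ) : ℂ) *
          (hermiteC (k + m) (x:ℂ) * s ^ k / (k.factorial : ℂ)) := by
      intro k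
      rw [hFdef]; dsimp only
      rw [integral_mul_const, integral_ofReal'']
      have hgv := hgval k
      rw [show (∫ t in Set.Ioi (0:ℝ), g k t)
          = ∫ t in Set.Ioi (0:ℝ), varpi m t * Real.exp (-((k:ℝ)*t)) from rfl] at hgv
      rw [hgv]
    rw [show (∑' k : ℕ, ∫ t in Set.Ioi (0:ℝ), F k t)
        = ∑' k : ℕ, (((Real.sqrt Real.pi/2)^m / (P k)^((3:ℝ)/2) : ℝ) : ℂ) *
          (hermiteC (k + m) (x:ℂ) * s ^ k / (k.factorial : ℂ)) from tsum_congr hFkint]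
    rw [← tsum_mul_left]
    apply tsum_congr
    intro k
    have hπ : Real.sqrt Real.pi ≠ 0 := ne_of_gt (Real.sqrt_pos.2 Real.pi_pos)
    have key : ((((2/Real.sqrt Real.pi)^m : ℝ)) : ℂ) * ((((Real.sqrt Real.pi/2)^m : ℝ)) : ℂ)
        = 1 := by
      rw [← Complex.ofReal_mul, ← mul_pow]
      rw [show (2/Real.sqrt Real.pi) * (Real.sqrt Real.pi/2) = 1 from by field_simp]
      norm_num
    calc hermiteC (k + m) (x:ℂ) * s ^ k /
        ((k.factorial : ℂ) * (((P k ^ ((3:ℝ)/2)) : ℝ) : ℂ))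
        = (((2/Real.sqrt Real.pi)^m : ℝ) : ℂ) * ((((Real.sqrt Real.pi/2)^m : ℝ)) : ℂ) *
            (hermiteC (k + m) (x:ℂ) * s ^ k) /
            ((k.factorial : ℂ) * (((P k ^ ((3:ℝ)/2)) : ℝ) : ℂ)) := by rw [key, one_mul]
      _ = (((2/Real.sqrt Real.pi)^m : ℝ) : ℂ) *
          ((((Real.sqrt Real.pi/2)^m / (P k)^((3:ℝ)/2) : ℝ)) : ℂ) *
            (hermiteC (k + m) (x:ℂ) * s ^ k / (k.factorial : ℂ)) := by
          push_cast
          ring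
      _ = _ := by ring


theorem stmt14 (m : ℕ) (hm : 2 ≤ m) (x : ℝ) (s : ℂ) :
    Summable (fun k : ℕ =>
      ‖hermiteC (k + m) (x : ℂ) * s ^ k /
        ((k.factorial : ℂ) *
          ((((∏ j ∈ Finset.Icc 1 m, ((k : ℝ) + (j : ℝ))) ^ ((3 : ℝ) / 2)) : ℝ) : ℂ))‖) ∧
    IntegrableOn (fun t : ℝ =>
      ((varpi m t : ℝ) : ℂ) *
        (Complex.exp (2 * (x : ℂ) * s * ((Real.exp (-t) : ℝ) : ℂ)
            - s ^ 2 * ((Real.exp (-2 * t) : ℝ) : ℂ)) *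
          hermiteC m ((x : ℂ) - s * ((Real.exp (-t) : ℝ) : ℂ)))) (Set.Ioi 0) ∧
    (∑' k : ℕ, hermiteC (k + m) (x : ℂ) * s ^ k /
        ((k.factorial : ℂ) *
          ((((∏ j ∈ Finset.Icc 1 m, ((k : ℝ) + (j : ℝ))) ^ ((3 : ℝ) / 2)) : ℝ) : ℂ))) =
      (((2 / Real.sqrt Real.pi) ^ m : ℝ) : ℂ) *
        ∫ t in Set.Ioi (0 : ℝ),
          ((varpi m t : ℝ) : ℂ) *
            (Complex.exp (2 * (x : ℂ) * s * ((Real.exp (-t) : ℝ) : ℂ)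
                - s ^ 2 * ((Real.exp (-2 * t) : ℝ) : ℂ)) *
              hermiteC m ((x : ℂ) - s * ((Real.exp (-t) : ℝ) : ℂ))) := by
  obtain ⟨n, rfl⟩ : ∃ n, m = n + 1 := ⟨m - 1, by omega⟩
  exact stmt14_aux n x s
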